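/- (Generalized Sauer–Shelah) Let C ⊆ P(X_0 × ⋯ × X_{n-1}) with VC_n(C) ≤ d, and let z = z_n(m, d+1) be the Zarankiewicz number. Then for every m ≥ d, π_{C,n}(m) ≤ Σ_{i < z} binomial(m^n, i). -/

import Mathlib

/-- `A` is a box of size `m` in the product `∏ i, X i`: each side has `m` elements. -/
def IsBox {n : ℕ} {X : Fin n → Type*} (A : ∀ i, Finset (X i)) (m : ℕ) : Prop :=
  ∀ i, (A i).card = m

/-- The subset of the product determined by a box. -/
def boxSet {n : ℕ} {X : Fin n → Type*} (A : ∀ i, Finset (X i)) : Set (∀ i, X i) :=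
  {f | ∀ i, f i ∈ A i}

/-- The traces of a family `𝒞` on the box `A`. -/
def traces {n : ℕ} {X : Fin n → Type*} (𝒞 : Set (Set (∀ i, X i)))
    (A : ∀ i, Finset (X i)) : Set (Set (∀ i, X i)) :=
  {s | ∃ C ∈ 𝒞, s = C ∩ boxSet A}

/-- `𝒞` shatters the box `A`. -/
def ShattersBox {n : ℕ} {X : Fin n → Type*} (𝒞 : Set (Set (∀ i, X i)))
    (A : ∀ i, Finset (X i)) : Prop :=
  ∀ B ⊆ boxSet A, ∃ C ∈ 𝒞, C ∩ boxSet A = B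

/-- An `n`-partite `n`-uniform hypergraph with parts of size `m` (modelled with all parts
equal to `Fin m` and edge set `E`) contains a complete `n`-partite subhypergraph with all
parts of size `d`. -/
def ContainsComplete (n m : ℕ) (E : Finset (Fin n → Fin m)) (d : ℕ) : Prop :=
  ∃ B : Fin n → Finset (Fin m), (∀ i, (B i).card = d) ∧
    ∀ f : Fin n → Fin m, (∀ i, f i ∈ B i) → f ∈ E

/-- The Zarankiewicz number `z_n(m, d)`: the least `z` such that every `n`-partite
`n`-uniform hypergraph with parts of size `m` and at least `z` edges contains a complete
`n`-partite subhypergraph with all parts of size `d`. -/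
noncomputable def zar (n m d : ℕ) : ℕ :=
  sInf {z : ℕ | ∀ E : Finset (Fin n → Fin m), z ≤ E.card → ContainsComplete n m E d}

lemma sauer_aux {α : Type*} [DecidableEq α] (𝒜 : Finset (Finset α)) (box : Finset α) (z : ℕ)
    (hsub : ∀ s ∈ 𝒜, s ⊆ box) (hsh : ∀ S, 𝒜.Shatters S → S.card < z) :
    𝒜.card ≤ ∑ i ∈ Finset.range z, box.card.choose i := by
  refine (Finset.card_le_card_shatterer 𝒜).trans ?_
  have h1 : 𝒜.shatterer ⊆ (Finset.range z).biUnion (fun k => box.powersetCard k) := by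
    intro S hS
    have hSh := Finset.mem_shatterer.1 hS
    obtain ⟨u, hu, hSu⟩ := hSh.exists_superset
    exact Finset.mem_biUnion.2 ⟨S.card, Finset.mem_range.2 (hsh S hSh),
      Finset.mem_powersetCard.2 ⟨hSu.trans (hsub u hu), rfl⟩⟩
  calc 𝒜.shatterer.card ≤ _ := Finset.card_le_card h1
    _ ≤ ∑ k ∈ Finset.range z, (box.powersetCard k).card := Finset.card_biUnion_le
    _ = ∑ i ∈ Finset.range z, box.card.choose i := by
        simp [Finset.card_powersetCard]

/-- Generalized Sauer–Shelah lemma: if `𝒞 ⊆ P(X_0 × ⋯ × X_{n-1})` has `VC_n(𝒞) ≤ d`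
(no box of size `d + 1` is shattered), then for every `m ≥ d` the number of traces of `𝒞`
on any box of size `m` is at most `∑_{i < z} (m^n choose i)` with `z = z_n(m, d + 1)`. -/
theorem stmt_5 {n : ℕ} {X : Fin n → Type*} [∀ i, Infinite (X i)]
    (𝒞 : Set (Set (∀ i, X i))) (d : ℕ)
    (hVC : ∀ A : ∀ i, Finset (X i), IsBox A (d + 1) → ¬ ShattersBox 𝒞 A) :
    ∀ m : ℕ, d ≤ m → ∀ A : ∀ i, Finset (X i), IsBox A m →
      (traces 𝒞 A).ncard ≤ ∑ i ∈ Finset.range (zar n m (d + 1)), (m ^ n).choose i := by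
  classical
  intro m _hm A hA
  set z := zar n m (d + 1) with hzdef
  have hzmem : ∀ E : Finset (Fin n → Fin m), z ≤ E.card → ContainsComplete n m E (d + 1) := by
    have hne : {z : ℕ | ∀ E : Finset (Fin n → Fin m), z ≤ E.card →
        ContainsComplete n m E (d + 1)}.Nonempty := by
      refine ⟨m ^ n + 1, fun E hE => absurd hE ?_⟩
      have hE' : E.card ≤ m ^ n := by
        have := Finset.card_le_univ E
        simpa using this
      omega
    exact Nat.sInf_mem hne
  set box : Finset (∀ i, X i) := Fintype.piFinset A with hboxdef
  have hboxset : boxSet A = ↑box := by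
    ext f; simp [boxSet, hboxdef, Fintype.mem_piFinset]
  have hboxcard : box.card = m ^ n := by
    have hA' : ∀ i, (A i).card = m := hA
    simp [hboxdef, Fintype.card_piFinset, hA']
  set 𝒜 : Finset (Finset (∀ i, X i)) :=
    box.powerset.filter (fun t => (↑t : Set (∀ i, X i)) ∈ traces 𝒞 A) with h𝒜def
  -- the equivalences
  let e : ∀ i, (A i) ≃ Fin m := fun i => (A i).equivFinOfCardEq (hA i)
  let Ψ : (Fin n → Fin m) → (∀ i, X i) := fun g i => ((e i).symm (g i) : X i)
  have hΨinj : Function.Injective Ψ := by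
    intro g g' hgg'
    funext i
    exact (e i).symm.injective (Subtype.ext (congrFun hgg' i))
  -- step 1 : ncard traces ≤ 𝒜.card
  have hsub : traces 𝒞 A ⊆ (fun t : Finset (∀ i, X i) => (↑t : Set (∀ i, X i))) '' (↑𝒜 : Set (Finset (∀ i, X i))) := by
    intro s hs
    have hsbox : s ⊆ ↑box := by
      obtain ⟨C, _, rfl⟩ := hs
      rw [← hboxset]
      exact Set.inter_subset_right
    refine ⟨box.filter (· ∈ s), ?_, ?_⟩
    · have hst : (↑(box.filter (· ∈ s)) : Set (∀ i, X i)) = s := by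
        ext x
        simp only [Finset.coe_filter, Set.mem_setOf_eq]
        exact ⟨fun h => h.2, fun h => ⟨hsbox h, h⟩⟩
      simp only [Finset.mem_coe, h𝒜def, Finset.mem_filter, Finset.mem_powerset]
      exact ⟨Finset.filter_subset _ _, by rw [hst]; exact hs⟩
    · ext x
      simp only [Finset.coe_filter, Set.mem_setOf_eq]
      exact ⟨fun h => h.2, fun h => ⟨hsbox h, h⟩⟩
  have h1 : (traces 𝒞 A).ncard ≤ 𝒜.card := by
    have h2 := Set.ncard_le_ncard hsub (((↑𝒜 : Set (Finset (∀ i, X i))).toFinite).image _)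
    rwa [Set.ncard_image_of_injective _ Finset.coe_injective, Set.ncard_coe_finset] at h2
  -- step 2 : shattered sets are small
  have hshatter : ∀ S, 𝒜.Shatters S → S.card < z := by
    intro S hS
    by_contra hlt
    push_neg at hlt
    obtain ⟨u, hu𝒜, hSu⟩ := hS.exists_superset
    have hubox : u ⊆ box := Finset.mem_powerset.1 (Finset.mem_filter.1 hu𝒜).1
    have hSbox : S ⊆ box := hSu.trans hubox
    set E : Finset (Fin n → Fin m) := Finset.univ.filter (fun g => Ψ g ∈ S) with hEdef
    have hES : E.image Ψ = S := by
      apply Finset.Subset.antisymm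
      · intro x hx
        obtain ⟨g, hg, rfl⟩ := Finset.mem_image.1 hx
        exact (Finset.mem_filter.1 hg).2
      · intro x hx
        have hxA : ∀ i, x i ∈ A i := fun i => Fintype.mem_piFinset.1 (hSbox hx) i
        have hΨx : Ψ (fun i => e i ⟨x i, hxA i⟩) = x := by
          funext i; simp [Ψ]
        exact Finset.mem_image.2 ⟨fun i => e i ⟨x i, hxA i⟩,
          Finset.mem_filter.2 ⟨Finset.mem_univ _, by rw [hΨx]; exact hx⟩, hΨx⟩
    have hcard : z ≤ E.card := by
      rw [← hES, Finset.card_image_of_injective _ hΨinj] at hlt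
      exact hlt
    obtain ⟨B, hBcard, hBcomp⟩ := hzmem E hcard
    set A' : ∀ i, Finset (X i) := fun i => (B i).image (fun b => ((e i).symm b : X i)) with hA'def
    have hinj : ∀ i, Function.Injective (fun b => ((e i).symm b : X i)) := by
      intro i b b' h
      exact (e i).symm.injective (Subtype.ext h)
    have hA'box : IsBox A' (d + 1) := by
      intro i
      rw [hA'def]
      rw [Finset.card_image_of_injective _ (hinj i)]
      exact hBcard i
    have hA'S : boxSet A' ⊆ ↑S := by
      intro x hx
      have hchoice : ∀ i, ∃ b ∈ B i, ((e i).symm b : X i) = x i := by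
        intro i
        have := hx i
        simpa [hA'def, Finset.mem_image] using this
      choose b hb hbe using hchoice
      have hxΨ : Ψ b = x := funext hbe
      have hbE := hBcomp b hb
      rw [hEdef, Finset.mem_filter] at hbE
      rw [← hxΨ]
      exact hbE.2
    refine hVC A' hA'box ?_
    intro B'' hB''
    obtain ⟨u', hu', hSu'⟩ := hS (t := S.filter (fun x => x ∈ B'')) (Finset.filter_subset _ _)
    obtain ⟨C, hC𝒞, hCu'⟩ := (Finset.mem_filter.1 hu').2
    refine ⟨C, hC𝒞, ?_⟩
    ext x
    constructor
    · rintro ⟨hxC, hxA'⟩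
      have hxS : x ∈ S := hA'S hxA'
      have hxA : x ∈ boxSet A := by
        rw [hboxset]
        exact hSbox hxS
      have hxu' : x ∈ (↑u' : Set (∀ i, X i)) := by
        rw [hCu']
        exact ⟨hxC, hxA⟩
      have : x ∈ S ∩ u' := Finset.mem_inter.2 ⟨hxS, hxu'⟩
      rw [hSu'] at this
      exact (Finset.mem_filter.1 this).2
    · intro hxB
      refine ⟨?_, hB'' hxB⟩
      have hxS : x ∈ S := hA'S (hB'' hxB)
      have : x ∈ S ∩ u' := by
        rw [hSu']
        exact Finset.mem_filter.2 ⟨hxS, hxB⟩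
      have hxu' : x ∈ (↑u' : Set (∀ i, X i)) := (Finset.mem_inter.1 this).2
      rw [hCu'] at hxu'
      exact hxu'.1
  -- combine
  have hsub𝒜 : ∀ s ∈ 𝒜, s ⊆ box := fun s hs =>
    Finset.mem_powerset.1 (Finset.mem_filter.1 hs).1
  calc (traces 𝒞 A).ncard ≤ 𝒜.card := h1
    _ ≤ ∑ i ∈ Finset.range z, box.card.choose i := sauer_aux 𝒜 box z hsub𝒜 hshatter
    _ = ∑ i ∈ Finset.range z, (m ^ n).choose i := by rw [hboxcard]
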